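/- arXiv:1609.08542 — 2 statements merged into one kernel-verified Lean document; each statement's English description precedes it below -/
import Mathlib

section
/- (Normal ordering for the relation XY = qYX + 1) Let A be a unital associative algebra over ℝ and let X, Y ∈ A satisfy X·Y = q·(Y·X) + 1. Then for all natural numbers m, n: X^m·Y^n = ∑_{i=0}^{m} q^{(n-i)(m-i)}·[i]_q!·binom(n,i)_q·binom(m,i)_q·Y^{n-i}·X^{m-i}, where every term with i > n has coefficient 0 (since binom(n,i)_q = 0), so the powers Y^{n-i} there may be interpreted via truncated subtraction. -/
/-- The q-integer `[n]_q = (1 - q^n)/(1 - q)`. -/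
noncomputable def qInt (q : ℝ) (n : ℕ) : ℝ := (1 - q ^ n) / (1 - q)

/-- The q-factorial `[n]_q! = [1]_q ⋯ [n]_q`, with `[0]_q! = 1`. -/
noncomputable def qFact (q : ℝ) : ℕ → ℝ
  | 0 => 1
  | n + 1 => qFact q n * qInt q (n + 1)

/-- The q-binomial coefficient `binom(n,m)_q`, with value `0` when `m > n`. -/
noncomputable def qBinom (q : ℝ) (n m : ℕ) : ℝ :=
  if m ≤ n then qFact q n / (qFact q m * qFact q (n - m)) else 0

variable {q : ℝ}

lemma one_sub_q_pos (hq₂ : q < 1) : 0 < 1 - q := by linarith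

lemma qInt_pos (hq₁ : -1 < q) (hq₂ : q < 1) {n : ℕ} (hn : n ≠ 0) : 0 < qInt q n := by
  have h1 : 0 < 1 - q := by linarith
  have h2 : q ^ n < 1 := by
    calc q ^ n ≤ |q ^ n| := le_abs_self _
    _ = |q| ^ n := by rw [abs_pow]
    _ < 1 := pow_lt_one₀ (abs_nonneg q) (abs_lt.mpr ⟨hq₁, hq₂⟩) hn
  exact div_pos (by linarith) h1

lemma qFact_pos (hq₁ : -1 < q) (hq₂ : q < 1) (n : ℕ) : 0 < qFact q n := by
  induction n with
  | zero => norm_num [qFact]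
  | succ k ih => exact mul_pos ih (qInt_pos hq₁ hq₂ k.succ_ne_zero)

lemma qInt_add (hq₂ : q < 1) (a b : ℕ) :
    qInt q (a + b) = qInt q a + q ^ a * qInt q b := by
  have h : (1 : ℝ) - q ≠ 0 := by linarith
  simp only [qInt]
  rw [pow_add]
  field_simp
  ring

lemma qInt_zero : qInt q 0 = 0 := by simp [qInt]

lemma qBinom_self (hq₁ : -1 < q) (hq₂ : q < 1) (k : ℕ) : qBinom q k k = 1 := by
  simp only [qBinom, if_pos le_rfl, Nat.sub_self]
  rw [show qFact q 0 = 1 from rfl, mul_one, div_self (qFact_pos hq₁ hq₂ k).ne']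

lemma qBinom_zero (hq₁ : -1 < q) (hq₂ : q < 1) (k : ℕ) : qBinom q k 0 = 1 := by
  simp only [qBinom, if_pos (Nat.zero_le k), Nat.sub_zero]
  rw [show qFact q 0 = 1 from rfl, one_mul, div_self (qFact_pos hq₁ hq₂ k).ne']

lemma qPascal (hq₁ : -1 < q) (hq₂ : q < 1) (m i : ℕ) :
    qBinom q (m+1) (i+1) = qBinom q m (i+1) + q ^ (m - i) * qBinom q m i := by
  have hF := fun k => (qFact_pos hq₁ hq₂ k).ne'
  have hI : ∀ k : ℕ, qInt q (k+1) ≠ 0 := fun k => (qInt_pos hq₁ hq₂ k.succ_ne_zero).ne'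
  rcases lt_or_ge m i with h | h
  · have h1 : ¬ (i + 1 ≤ m + 1) := by omega
    have h2 : ¬ (i + 1 ≤ m) := by omega
    have h3 : ¬ (i ≤ m) := by omega
    simp [qBinom, h1, h2, h3]
  · rcases eq_or_lt_of_le h with h' | h'
    · subst h'
      have h2 : ¬ (i + 1 ≤ i) := by omega
      rw [qBinom_self hq₁ hq₂, qBinom_self hq₁ hq₂, show qBinom q i (i+1) = 0 from by
        simp [qBinom, h2], Nat.sub_self, pow_zero]
      norm_num
    · obtain ⟨b, rfl⟩ : ∃ b, m = i + 1 + b := ⟨m - (i+1), by omega⟩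
      simp only [qBinom, if_pos (show i+1 ≤ i+1+b+1 by omega), if_pos (show i+1 ≤ i+1+b by omega),
        if_pos (show i ≤ i+1+b by omega),
        show i+1+b+1 - (i+1) = b+1 from by omega, show i+1+b - (i+1) = b from by omega,
        show i+1+b - i = b+1 from by omega]
      have e1 : qFact q (i+1+b+1) = qFact q (i+1+b) * qInt q ((b+1)+(i+1)) := by
        rw [show (b+1)+(i+1) = i+1+b+1 from by omega]; rfl
      have e3 : qFact q (b+1) = qFact q b * qInt q (b+1) := rfl
      have e4 : qFact q (i+1) = qFact q i * qInt q (i+1) := rfl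
      rw [e1, qInt_add hq₂ (b+1) (i+1), e3, e4]
      have h1 := hI i; have h2 := hI b
      have h1' : qInt q (1+i) ≠ 0 := by rw [add_comm]; exact h1
      have h2' : qInt q (1+b) ≠ 0 := by rw [add_comm]; exact h2
      field_simp [hF, h1, h2, h1', h2']

lemma qAbsorb (hq₁ : -1 < q) (hq₂ : q < 1) (n i : ℕ) :
    qFact q (i+1) * qBinom q n (i+1) = qInt q (n - i) * (qFact q i * qBinom q n i) := by
  have hF := fun k => (qFact_pos hq₁ hq₂ k).ne'
  have hI : ∀ k : ℕ, qInt q (k+1) ≠ 0 := fun k => (qInt_pos hq₁ hq₂ k.succ_ne_zero).ne'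
  rcases lt_or_ge n (i+1) with h | h
  · have h1 : ¬ (i + 1 ≤ n) := by omega
    have h2 : n - i = 0 := by omega
    simp [qBinom, h1, h2, qInt_zero]
  · obtain ⟨a, rfl⟩ : ∃ a, n = i + 1 + a := ⟨n - (i+1), by omega⟩
    simp only [qBinom, if_pos (show i+1 ≤ i+1+a by omega), if_pos (show i ≤ i+1+a by omega),
      show i+1+a - (i+1) = a from by omega, show i+1+a - i = a+1 from by omega]
    have e2 : qFact q (a+1) = qFact q a * qInt q (a+1) := rfl
    have e4 : qFact q (i+1) = qFact q i * qInt q (i+1) := rfl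
    rw [e2, e4]
    have h1 := hI i; have h2 := hI a
    have h1' : qInt q (1+i) ≠ 0 := by rw [add_comm]; exact h1
    have h2' : qInt q (1+a) ≠ 0 := by rw [add_comm]; exact h2
    field_simp [hF, h1, h2, h1', h2']

lemma coeff_rec (hq₁ : -1 < q) (hq₂ : q < 1) (m n i : ℕ) :
    q ^ ((n - (i+1)) * (m + 1 - (i+1))) * qFact q (i+1) * qBinom q n (i+1) * qBinom q (m+1) (i+1)
    = q ^ (n - (i+1)) *
        (q ^ ((n - (i+1)) * (m - (i+1))) * qFact q (i+1) * qBinom q n (i+1) * qBinom q m (i+1))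
      + qInt q (n - i) *
        (q ^ ((n - i) * (m - i)) * qFact q i * qBinom q n i * qBinom q m i) := by
  rcases lt_or_ge n (i+1) with hn | hn
  · have h1 : ¬ (i + 1 ≤ n) := by omega
    have h2 : n - i = 0 := by omega
    simp [qBinom, h1, h2, qInt_zero]
  · rcases lt_or_ge m i with hm | hm
    · have h1 : ¬ (i + 1 ≤ m + 1) := by omega
      have h2 : ¬ (i + 1 ≤ m) := by omega
      have h3 : ¬ (i ≤ m) := by omega
      simp [qBinom, h1, h2, h3]
    · rcases eq_or_lt_of_le hm with hm' | hm'
      · -- i = m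
        subst hm'
        have h2 : ¬ (i + 1 ≤ i) := by omega
        have hA := qAbsorb hq₁ hq₂ n i
        rw [qBinom_self hq₁ hq₂, qBinom_self hq₁ hq₂,
          show qBinom q i (i+1) = 0 from by simp [qBinom, h2]]
        simp only [Nat.sub_self, show i+1-(i+1) = 0 from by omega, Nat.mul_zero, pow_zero,
          mul_zero, zero_mul, zero_add, mul_one]
        linear_combination hA
      · -- i < m
        obtain ⟨a, rfl⟩ : ∃ a, n = i + 1 + a := ⟨n - (i+1), by omega⟩
        obtain ⟨b, rfl⟩ : ∃ b, m = i + 1 + b := ⟨m - (i+1), by omega⟩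
        have hP := qPascal hq₁ hq₂ (i+1+b) i
        rw [show i+1+b-i = b+1 from by omega] at hP
        have hA := qAbsorb hq₁ hq₂ (i+1+a) i
        rw [show i+1+a-i = a+1 from by omega] at hA
        simp only [show i+1+a-(i+1) = a from by omega, show i+1+a-i = a+1 from by omega,
          show i+1+b+1-(i+1) = b+1 from by omega, show i+1+b-(i+1) = b from by omega,
          show i+1+b-i = b+1 from by omega]
        rw [hP, show (a+1)*(b+1) = a*b+a+(b+1) from by ring,
          show a*(b+1) = a*b+a from by ring, pow_add, pow_add, pow_add]
        linear_combination (q^(a*b) * q^a * q^(b+1) * qBinom q (i+1+b) i) * hA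

lemma qInt_one (hq₂ : q < 1) : qInt q 1 = 1 := by
  rw [qInt, pow_one, div_self (by linarith : (1:ℝ) - q ≠ 0)]

lemma qInt_succ (hq₂ : q < 1) (k : ℕ) : qInt q (k + 1) = q * qInt q k + 1 := by
  rw [add_comm k 1, qInt_add hq₂ 1 k, qInt_one hq₂, pow_one, add_comm]

lemma comm_pow (hq₂ : q < 1) {A : Type*} [Ring A] [Algebra ℝ A] (X Y : A)
    (hXY : X * Y = q • (Y * X) + 1) :
    ∀ k : ℕ, X * Y ^ k = (q ^ k) • (Y ^ k * X) + (qInt q k) • Y ^ (k - 1) := by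
  intro k
  induction k with
  | zero => simp [qInt_zero]
  | succ k ih =>
    have step : X * Y ^ (k+1) = q • (Y * (X * Y ^ k)) + Y ^ k := by
      rw [pow_succ' Y k, ← mul_assoc, hXY, add_mul, one_mul, smul_mul_assoc, mul_assoc]
    rw [step, ih]
    rcases k with _ | k
    · simp [qInt_zero, qInt_one hq₂]
    · have hY : Y * (Y ^ (k+1) * X) = Y ^ (k+2) * X := by
        rw [← mul_assoc, ← pow_succ' Y (k+1)]
      have hY2 : Y * Y ^ (k+1-1) = Y ^ (k+1) := by
        rw [Nat.add_sub_cancel, ← pow_succ' Y k]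
      rw [mul_add, mul_smul_comm, mul_smul_comm, hY, hY2, smul_add, smul_smul, smul_smul,
        ← pow_succ' q (k+1), Nat.add_sub_cancel]
      rw [qInt_succ hq₂ (k+1)]
      rw [add_smul, one_smul]
      ring_nf
      abel

/-- Normal ordering for the relation `XY = qYX + 1`. -/
theorem normal_ordering_XY (q : ℝ) (hq₁ : -1 < q) (hq₂ : q < 1)
    {A : Type*} [Ring A] [Algebra ℝ A] (X Y : A)
    (hXY : X * Y = q • (Y * X) + 1) (m n : ℕ) :
    X ^ m * Y ^ n =
      ∑ i ∈ Finset.range (m + 1),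
        (q ^ ((n - i) * (m - i)) * qFact q i * qBinom q n i * qBinom q m i) •
          (Y ^ (n - i) * X ^ (m - i)) := by
  induction m with
  | zero =>
    rw [Finset.sum_range_one]
    simp only [Nat.sub_zero, Nat.mul_zero, Nat.zero_sub, pow_zero]
    rw [qBinom_zero hq₁ hq₂ n, qBinom_zero hq₁ hq₂ 0,
      show qFact q 0 = 1 from rfl]
    simp
  | succ m ih =>
    have hctop : qBinom q m (m+1) = 0 := by
      simp [qBinom, show ¬ (m+1 ≤ m) from by omega]
    have key : ∀ i ∈ Finset.range (m+1),
        X * ((q ^ ((n - i) * (m - i)) * qFact q i * qBinom q n i * qBinom q m i) •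
              (Y ^ (n - i) * X ^ (m - i)))
        = (q ^ (n-i) * (q ^ ((n - i) * (m - i)) * qFact q i * qBinom q n i * qBinom q m i)) •
              (Y ^ (n - i) * X ^ (m+1-i))
          + (qInt q (n-i) * (q ^ ((n - i) * (m - i)) * qFact q i * qBinom q n i * qBinom q m i)) •
              (Y ^ (n - (i+1)) * X ^ (m+1-(i+1)))  := by
      intro i hi
      have hi' : i ≤ m := by simpa [Nat.lt_succ_iff] using hi
      rw [mul_smul_comm, ← mul_assoc, comm_pow hq₂ X Y hXY (n-i)]
      rw [add_mul, smul_mul_assoc, smul_mul_assoc,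
        mul_assoc (Y ^ (n-i)) X (X ^ (m-i)), ← pow_succ' X (m-i)]
      rw [show m - i + 1 = m + 1 - i from by omega, Nat.sub_sub,
        show m + 1 - (i+1) = m - i from by omega]
      rw [smul_add, smul_smul, smul_smul]
      rw [mul_comm (q ^ ((n - i) * (m - i)) * qFact q i * qBinom q n i * qBinom q m i) (q ^ (n-i)),
        mul_comm (q ^ ((n - i) * (m - i)) * qFact q i * qBinom q n i * qBinom q m i) (qInt q (n-i))]
    have hext : (∑ i ∈ Finset.range (m+1),
          (q ^ (n-i) * (q ^ ((n - i) * (m - i)) * qFact q i * qBinom q n i * qBinom q m i)) •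
            (Y ^ (n - i) * X ^ (m+1-i)))
        = ∑ i ∈ Finset.range (m+2),
          (q ^ (n-i) * (q ^ ((n - i) * (m - i)) * qFact q i * qBinom q n i * qBinom q m i)) •
            (Y ^ (n - i) * X ^ (m+1-i)) := by
      rw [Finset.sum_range_succ (n := m+1)]
      rw [hctop]
      simp
    have hshift : (∑ i ∈ Finset.range (m+1),
          (qInt q (n-i) * (q ^ ((n - i) * (m - i)) * qFact q i * qBinom q n i * qBinom q m i)) •
            (Y ^ (n - (i+1)) * X ^ (m+1-(i+1))))
        = ∑ j ∈ Finset.range (m+2),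
          (if j = 0 then (0:ℝ) else
            qInt q (n-(j-1)) * (q ^ ((n - (j-1)) * (m - (j-1))) * qFact q (j-1) *
              qBinom q n (j-1) * qBinom q m (j-1))) • (Y ^ (n - j) * X ^ (m+1-j)) := by
      rw [Finset.sum_range_succ' (n := m+1)]
      simp only [if_neg (Nat.succ_ne_zero _), Nat.add_sub_cancel, if_pos rfl, zero_smul, add_zero]
      simp
    calc X ^ (m+1) * Y ^ n = X * (X ^ m * Y ^ n) := by rw [pow_succ', mul_assoc]
      _ = ∑ i ∈ Finset.range (m+1),
            X * ((q ^ ((n - i) * (m - i)) * qFact q i * qBinom q n i * qBinom q m i) •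
              (Y ^ (n - i) * X ^ (m - i))) := by rw [ih, Finset.mul_sum]
      _ = ∑ i ∈ Finset.range (m+1),
            ((q ^ (n-i) * (q ^ ((n - i) * (m - i)) * qFact q i * qBinom q n i * qBinom q m i)) •
              (Y ^ (n - i) * X ^ (m+1-i))
            + (qInt q (n-i) * (q ^ ((n - i) * (m - i)) * qFact q i * qBinom q n i * qBinom q m i)) •
              (Y ^ (n - (i+1)) * X ^ (m+1-(i+1)))) := Finset.sum_congr rfl key
      _ = (∑ i ∈ Finset.range (m+1),
            (q ^ (n-i) * (q ^ ((n - i) * (m - i)) * qFact q i * qBinom q n i * qBinom q m i)) •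
              (Y ^ (n - i) * X ^ (m+1-i)))
          + ∑ i ∈ Finset.range (m+1),
            (qInt q (n-i) * (q ^ ((n - i) * (m - i)) * qFact q i * qBinom q n i * qBinom q m i)) •
              (Y ^ (n - (i+1)) * X ^ (m+1-(i+1))) := Finset.sum_add_distrib
      _ = ∑ j ∈ Finset.range (m+2),
            ((q ^ (n-j) * (q ^ ((n - j) * (m - j)) * qFact q j * qBinom q n j * qBinom q m j)) •
              (Y ^ (n - j) * X ^ (m+1-j))
            + (if j = 0 then (0:ℝ) else
                qInt q (n-(j-1)) * (q ^ ((n - (j-1)) * (m - (j-1))) * qFact q (j-1) *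
                  qBinom q n (j-1) * qBinom q m (j-1))) • (Y ^ (n - j) * X ^ (m+1-j))) := by
            rw [hext, hshift, ← Finset.sum_add_distrib]
      _ = ∑ i ∈ Finset.range (m+1+1),
            (q ^ ((n - i) * (m+1 - i)) * qFact q i * qBinom q n i * qBinom q (m+1) i) •
              (Y ^ (n - i) * X ^ (m+1 - i)) := by
            refine Finset.sum_congr rfl ?_
            intro j _
            rw [← add_smul]
            rcases j with _ | i
            · rw [if_pos rfl, add_zero]
              rw [qBinom_zero hq₁ hq₂ m, qBinom_zero hq₁ hq₂ (m+1),
                show qFact q 0 = 1 from rfl]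
              simp only [Nat.sub_zero]
              rw [show n * (m+1) = n * m + n from by ring, pow_add]
              ring_nf
            · rw [if_neg (Nat.succ_ne_zero i), Nat.add_sub_cancel]
              rw [coeff_rec hq₁ hq₂ m n i]
end

section
/- (Uniform two-sided bound on q-binomial coefficients) For all natural numbers n, m with m ≤ n, one has (D(q)·C(|q|))^{-1} ≤ binom(n,m)_q ≤ D(q)·C(|q|); in particular binom(n,m)_q > 0. -/
variable {t : ℝ}

lemma pow_succ_lt_one (h0 : 0 ≤ t) (h1 : t < 1) (i : ℕ) : t ^ (i + 1) < 1 :=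
  pow_lt_one₀ h0 h1 (Nat.succ_ne_zero i)

lemma summable_log_one_add (h0 : 0 ≤ t) (h1 : t < 1) :
    Summable fun i : ℕ => Real.log (1 + t ^ (i + 1)) := by
  have hg : Summable fun i : ℕ => t ^ (i + 1) := by
    have := (summable_geometric_of_lt_one h0 h1).mul_left t
    simpa [pow_succ, mul_comm] using this
  refine Summable.of_nonneg_of_le (fun i => Real.log_nonneg (by nlinarith [pow_nonneg h0 (i+1)])) (fun i => ?_) hg
  have := Real.log_le_sub_one_of_pos (x := 1 + t ^ (i + 1)) (by positivity)
  linarith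

lemma summable_log_inv_one_sub (h0 : 0 ≤ t) (h1 : t < 1) :
    Summable fun i : ℕ => Real.log (1 - t ^ (i + 1))⁻¹ := by
  have hg : Summable fun i : ℕ => (1 - t)⁻¹ * t ^ (i + 1) := by
    exact ((summable_geometric_of_lt_one h0 h1).mul_left ((1 - t)⁻¹ * t)).congr
      (fun i => by ring)
  refine Summable.of_nonneg_of_le (fun i => ?_) (fun i => ?_) hg
  · have hlt := pow_succ_lt_one h0 h1 i
    have : (1:ℝ) ≤ (1 - t ^ (i + 1))⁻¹ := (one_le_inv₀ (by linarith)).mpr (by nlinarith [pow_nonneg h0 (i+1)])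
    exact Real.log_nonneg this
  · have hlt := pow_succ_lt_one h0 h1 i
    have hp : (0:ℝ) < 1 - t ^ (i + 1) := by linarith
    have h2 := Real.log_le_sub_one_of_pos (inv_pos.mpr hp)
    have h3 : (1 - t ^ (i + 1))⁻¹ - 1 = t ^ (i + 1) / (1 - t ^ (i + 1)) := by
      field_simp
      ring
    have h4 : t ^ (i + 1) / (1 - t ^ (i + 1)) ≤ t ^ (i + 1) / (1 - t) := by
      apply div_le_div_of_nonneg_left (by positivity) (by linarith)
      have : t ^ (i + 1) ≤ t := by
        calc t ^ (i+1) ≤ t ^ 1 := pow_le_pow_of_le_one h0 (le_of_lt h1) (by omega)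
        _ = t := pow_one t
      linarith
    have h5 : t ^ (i + 1) / (1 - t) = (1 - t)⁻¹ * t ^ (i + 1) := div_eq_inv_mul _ _
    linarith

lemma multipliable_one_add (h0 : 0 ≤ t) (h1 : t < 1) :
    Multipliable fun i : ℕ => 1 + t ^ (i + 1) := by
  exact Real.multipliable_of_summable_log
    (fun i => by positivity) (summable_log_one_add h0 h1)

lemma multipliable_inv_one_sub (h0 : 0 ≤ t) (h1 : t < 1) :
    Multipliable fun i : ℕ => (1 - t ^ (i + 1))⁻¹ := by
  exact Real.multipliable_of_summable_log
    (fun i => inv_pos.mpr (by have := pow_succ_lt_one h0 h1 i; linarith))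
    (summable_log_inv_one_sub h0 h1)

/-- The constant `C(t) = ∏_{i=1}^∞ (1 - t^i)⁻¹` for `0 ≤ t < 1`. -/
noncomputable def Cconst (t : ℝ) : ℝ := ∏' i : ℕ, (1 - t ^ (i + 1))⁻¹

/-- The constant `D(q) = ∏_{i=1}^∞ (1 + |q|^i)` for `-1 < q < 1`. -/
noncomputable def Dconst (q : ℝ) : ℝ := ∏' i : ℕ, (1 + |q| ^ (i + 1))

lemma one_le_finset_prod {f : ℕ → ℝ} (h1 : ∀ i, 1 ≤ f i) (s : Finset ℕ) :
    1 ≤ ∏ i ∈ s, f i := by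
  have := Finset.prod_le_prod (s := s) (f := fun _ => (1:ℝ)) (g := f)
    (fun i _ => zero_le_one) (fun i _ => h1 i)
  simpa using this

lemma real_prod_le_tprod {f : ℕ → ℝ} (h1 : ∀ i, 1 ≤ f i) (hf : Multipliable f) (s : Finset ℕ) :
    ∏ i ∈ s, f i ≤ ∏' i, f i := by
  refine ge_of_tendsto hf.hasProd (Filter.eventually_atTop.2 ⟨s, fun u hsu => ?_⟩)
  rw [← Finset.prod_sdiff hsu]
  exact le_mul_of_one_le_left (le_trans zero_le_one (one_le_finset_prod h1 s))
    (one_le_finset_prod h1 _)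

lemma qFact_eq (q : ℝ) (hq : q < 1) (n : ℕ) :
    qFact q n = (∏ i ∈ Finset.range n, (1 - q ^ (i + 1))) / (1 - q) ^ n := by
  have h1 : (1:ℝ) - q ≠ 0 := by intro h; linarith
  induction n with
  | zero => simp [qFact]
  | succ k ih =>
      rw [qFact, ih, qInt, div_mul_div_comm, ← Finset.prod_range_succ
        (fun i => 1 - q ^ (i + 1)), ← pow_succ]

set_option maxHeartbeats 1000000 in
/-- Uniform two-sided bound on q-binomial coefficients. -/
theorem qBinom_bounds (q : ℝ) (hq₁ : -1 < q) (hq₂ : q < 1) (n m : ℕ) (h : m ≤ n) :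
    (Dconst q * Cconst |q|)⁻¹ ≤ qBinom q n m ∧
    qBinom q n m ≤ Dconst q * Cconst |q| ∧
    0 < qBinom q n m := by
  set t := |q| with ht
  have h0 : 0 ≤ t := abs_nonneg q
  have h1 : t < 1 := abs_lt.mpr ⟨hq₁, hq₂⟩
  have hqt : ∀ i : ℕ, |q ^ (i+1)| = t ^ (i+1) := fun i => abs_pow q (i+1)
  have hpos : ∀ i : ℕ, 0 < 1 - q ^ (i+1) := fun i => by
    have := (abs_lt.mp (lt_of_le_of_lt (le_of_eq (hqt i)) (pow_succ_lt_one h0 h1 i))).2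
    linarith
  have hlo : ∀ i : ℕ, 1 - t ^ (i+1) ≤ 1 - q ^ (i+1) := fun i => by
    have := le_abs_self (q ^ (i+1)); rw [hqt i] at this; linarith
  have hhi : ∀ i : ℕ, 1 - q ^ (i+1) ≤ 1 + t ^ (i+1) := fun i => by
    have := neg_abs_le (q ^ (i+1)); rw [hqt i] at this; linarith
  have MD := multipliable_one_add h0 h1
  have MC := multipliable_inv_one_sub h0 h1
  have hD1 : (1:ℝ) ≤ Dconst q := by
    have := real_prod_le_tprod (f := fun i : ℕ => 1 + t ^ (i+1))
      (fun i => by show (1:ℝ) ≤ 1 + t ^ (i+1); nlinarith [pow_nonneg h0 (i+1)]) MD ∅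
    simpa [Dconst, ht] using this
  have hC1 : (1:ℝ) ≤ Cconst t := by
    have := real_prod_le_tprod (f := fun i : ℕ => (1 - t ^ (i+1))⁻¹)
      (fun i => (one_le_inv₀ (by have := pow_succ_lt_one h0 h1 i; linarith)).mpr
        (by nlinarith [pow_nonneg h0 (i+1)])) MC ∅
    simpa [Cconst] using this
  have hD0 : (0:ℝ) < Dconst q := lt_of_lt_of_le one_pos hD1
  have hC0 : (0:ℝ) < Cconst t := lt_of_lt_of_le one_pos hC1
  -- bounds for arbitrary finite products
  have key : ∀ s : Finset ℕ, (Cconst t)⁻¹ ≤ (∏ i ∈ s, (1 - q ^ (i+1))) ∧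
      (∏ i ∈ s, (1 - q ^ (i+1))) ≤ Dconst q ∧ 0 < ∏ i ∈ s, (1 - q ^ (i+1)) := by
    intro s
    have hprodpos : 0 < ∏ i ∈ s, (1 - q ^ (i+1)) :=
      Finset.prod_pos (fun i _ => hpos i)
    refine ⟨?_, ?_, hprodpos⟩
    · have hb : ∏ i ∈ s, (1 - t ^ (i+1)) ≤ ∏ i ∈ s, (1 - q ^ (i+1)) :=
        Finset.prod_le_prod
          (fun i _ => by nlinarith [pow_succ_lt_one h0 h1 i, pow_nonneg h0 (i+1)])
          (fun i _ => hlo i)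
      have hc : ∏ i ∈ s, (1 - t ^ (i+1))⁻¹ ≤ Cconst t := by
        have := real_prod_le_tprod (f := fun i : ℕ => (1 - t ^ (i+1))⁻¹)
          (fun i => (one_le_inv₀ (by have := pow_succ_lt_one h0 h1 i; linarith)).mpr
            (by nlinarith [pow_nonneg h0 (i+1)])) MC s
        simpa [Cconst] using this
      rw [Finset.prod_inv_distrib] at hc
      have hppos : 0 < ∏ i ∈ s, (1 - t ^ (i+1)) :=
        Finset.prod_pos (fun i _ => by have := pow_succ_lt_one h0 h1 i; linarith)
      have := inv_anti₀ (inv_pos.mpr hppos) hc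
      rw [inv_inv] at this
      linarith
    · have hb : ∏ i ∈ s, (1 - q ^ (i+1)) ≤ ∏ i ∈ s, (1 + t ^ (i+1)) :=
        Finset.prod_le_prod (fun i _ => le_of_lt (hpos i)) (fun i _ => hhi i)
      have hc := real_prod_le_tprod (f := fun i : ℕ => 1 + t ^ (i+1))
        (fun i => by show (1:ℝ) ≤ 1 + t ^ (i+1); nlinarith [pow_nonneg h0 (i+1)]) MD s
      simp only [Dconst, ← ht]
      linarith [hc]
  -- rewrite qBinom
  have hq1 : (1:ℝ) - q ≠ 0 := by intro hh; linarith
  have hqb : qBinom q n m = (∏ i ∈ Finset.Ico m n, (1 - q ^ (i+1))) /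
      (∏ i ∈ Finset.range (n - m), (1 - q ^ (i+1))) := by
    rw [qBinom, if_pos h, qFact_eq q hq₂, qFact_eq q hq₂, qFact_eq q hq₂]
    rw [← Finset.prod_range_mul_prod_Ico (fun i => (1 - q ^ (i+1))) h]
    have hpow : (1 - q) ^ m * (1 - q) ^ (n - m) = (1 - q) ^ n := by
      rw [← pow_add]; congr 1; omega
    have hm0 : (0:ℝ) < ∏ i ∈ Finset.range m, (1 - q ^ (i+1)) :=
      Finset.prod_pos (fun i _ => hpos i)
    rw [div_mul_div_comm, hpow, div_div_div_cancel_right₀ (pow_ne_zero n hq1),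
      mul_div_mul_left _ _ hm0.ne']
  obtain ⟨hA1, hA2, hA0⟩ := key (Finset.Ico m n)
  obtain ⟨hB1, hB2, hB0⟩ := key (Finset.range (n - m))
  rw [hqb]
  refine ⟨?_, ?_, div_pos hA0 hB0⟩
  · have : (Dconst q * Cconst t)⁻¹ = (Cconst t)⁻¹ / Dconst q := by
      rw [mul_inv, div_eq_mul_inv, mul_comm]
    rw [this]
    exact div_le_div₀ (le_of_lt hA0) hA1 hB0 hB2
  · have : Dconst q * Cconst t = Dconst q / (Cconst t)⁻¹ := by
      field_simp
    rw [this]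
    exact div_le_div₀ (le_of_lt hD0) hA2 (inv_pos.mpr hC0) hB1
end
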